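/- Let Y ⊆ ℝ^d be closed convex, f_i : Y → ℝ continuous convex for i∈I (I finite), X := {x∈Y : f_i(x) ≤ 0 ∀i} compact, and suppose the Slater condition holds: there is x̄ ∈ Y with ε̊ := min_i(−f_i(x̄)) > 0. Let f : Y → ℝ be α-Hölder with constant L. Then for every γ ∈ (0, ε̊/2], with c := 2·D(X)/ε̊: 0 ≤ gap(γ) := min_{X_{−γ}} f − min_X f ≤ L (cγ)^α, where X_{−γ} := {x∈Y : f_i(x) ≤ −γ ∀i}. Moreover gap(γ) = 0 if some minimizer of f over X lies in X_{−γ}. -/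

import Mathlib

/-- Interior optimality error under the Slater condition: for `γ ∈ (0, ε̊/2]` and
`c = 2·diam X / ε̊`, one has `0 ≤ gap(γ) := min_{X_{-γ}} f − min_X f ≤ L (cγ)^α`,
and `gap(γ) = 0` if some minimizer of `f` over `X` lies in `X_{-γ}`. -/
theorem stmt_8 {d : ℕ} {ι : Type*} [Fintype ι] [Nonempty ι]
    (Y : Set (EuclideanSpace ℝ (Fin d))) (hYcl : IsClosed Y) (hYcon : Convex ℝ Y)
    (f : EuclideanSpace ℝ (Fin d) → ℝ) (fI : ι → EuclideanSpace ℝ (Fin d) → ℝ)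
    (hfIc : ∀ i, ContinuousOn (fI i) Y) (hfIv : ∀ i, ConvexOn ℝ Y (fI i))
    (hX : IsCompact {x ∈ Y | ∀ i, fI i x ≤ 0})
    (xbar : EuclideanSpace ℝ (Fin d)) (hxbar : xbar ∈ Y)
    (hslater : 0 < ⨅ i, -fI i xbar)
    (L α : ℝ) (hL : 0 ≤ L) (hα0 : 0 < α) (hα1 : α ≤ 1)
    (hHol : ∀ x ∈ Y, ∀ y ∈ Y, |f x - f y| ≤ L * ‖x - y‖ ^ α)
    (γ : ℝ) (hγ0 : 0 < γ) (hγ : γ ≤ (⨅ i, -fI i xbar) / 2) :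
    0 ≤ sInf (f '' {x ∈ Y | ∀ i, fI i x ≤ -γ}) - sInf (f '' {x ∈ Y | ∀ i, fI i x ≤ 0}) ∧
    sInf (f '' {x ∈ Y | ∀ i, fI i x ≤ -γ}) - sInf (f '' {x ∈ Y | ∀ i, fI i x ≤ 0}) ≤
      L * ((2 * Metric.diam {x ∈ Y | ∀ i, fI i x ≤ 0} / ⨅ i, -fI i xbar) * γ) ^ α ∧
    ((∃ xm ∈ {x ∈ Y | ∀ i, fI i x ≤ 0},
        (∀ z ∈ {x ∈ Y | ∀ i, fI i x ≤ 0}, f xm ≤ f z) ∧ ∀ i, fI i xm ≤ -γ) →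
      sInf (f '' {x ∈ Y | ∀ i, fI i x ≤ -γ}) = sInf (f '' {x ∈ Y | ∀ i, fI i x ≤ 0})) := by
  set ε := ⨅ i, -fI i xbar with hεdef
  set X := {x ∈ Y | ∀ i, fI i x ≤ 0} with hXdef
  set Xγ := {x ∈ Y | ∀ i, fI i x ≤ -γ} with hXγdef
  have hεi : ∀ i, ε ≤ -fI i xbar := fun i => ciInf_le (Finite.bddBelow_range _) i
  have hγε : γ ≤ ε := hγ.trans (by linarith)
  have hxbarXγ : xbar ∈ Xγ := ⟨hxbar, fun i => by have := hεi i; linarith⟩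
  have hXγX : Xγ ⊆ X := fun x hx => ⟨hx.1, fun i => (hx.2 i).trans (by linarith)⟩
  have hxbarX : xbar ∈ X := hXγX hxbarXγ
  have hXY : X ⊆ Y := fun x hx => hx.1
  -- f is continuous on Y
  have hfcont : ContinuousOn f Y := by
    intro x hx
    have key : ∀ y ∈ Y, dist (f y) (f x) ≤ L * dist y x ^ α := by
      intro y hy
      have := hHol y hy x hx
      simpa [Real.dist_eq, dist_eq_norm] using this
    rw [ContinuousWithinAt, tendsto_iff_dist_tendsto_zero]
    have h1 : Filter.Tendsto (fun y => L * dist y x ^ α) (nhdsWithin x Y) (nhds 0) := by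
      have hc : Continuous fun y : EuclideanSpace ℝ (Fin d) => dist y x := by fun_prop
      have h2 : Filter.Tendsto (fun y => dist y x) (nhdsWithin x Y) (nhds 0) := by
        have := (hc.tendsto x).mono_left (nhdsWithin_le_nhds : nhdsWithin x Y ≤ nhds x)
        simpa using this
      have h3 : ContinuousAt (fun s : ℝ => L * s ^ α) 0 :=
        (Real.continuousAt_rpow_const 0 α (Or.inr hα0.le)).const_smul L
      have := h3.tendsto.comp h2
      simpa [Function.comp_def, Real.zero_rpow hα0.ne'] using this
    exact squeeze_zero'
      (Filter.eventually_of_mem self_mem_nhdsWithin (fun y _ => dist_nonneg))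
      (Filter.eventually_of_mem self_mem_nhdsWithin key) h1
  -- minimizer on X
  obtain ⟨xs, hxsX, hxsmin⟩ := hX.exists_isMinOn ⟨xbar, hxbarX⟩ (hfcont.mono hXY)
  have hmin : ∀ z ∈ X, f xs ≤ f z := fun z hz => hxsmin hz
  have hInfX : sInf (f '' X) = f xs :=
    IsLeast.csInf_eq ⟨Set.mem_image_of_mem f hxsX, fun v ⟨z, hz, hzv⟩ => hzv ▸ hmin z hz⟩
  have hbddX : BddBelow (f '' X) := (hX.image_of_continuousOn (hfcont.mono hXY)).bddBelow
  have hbddXγ : BddBelow (f '' Xγ) := hbddX.mono (Set.image_mono (f := f) hXγX)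
  have hne : (f '' Xγ).Nonempty := ⟨f xbar, Set.mem_image_of_mem f hxbarXγ⟩
  have hpart1 : sInf (f '' X) ≤ sInf (f '' Xγ) :=
    csInf_le_csInf hbddX hne (Set.image_mono (f := f) hXγX)
  refine ⟨by linarith, ?_, ?_⟩
  · -- main bound
    set t := 2 * γ / ε with htdef
    have ht0 : 0 ≤ t := by positivity
    have ht1 : t ≤ 1 := by rw [htdef, div_le_one hslater]; linarith
    set xt := (1 - t) • xs + t • xbar with hxtdef
    have hxtY : xt ∈ Y := hYcon hxsX.1 hxbar (by linarith) ht0 (by ring)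
    have htε : t * ε = 2 * γ := by rw [htdef]; field_simp
    have hxtXγ : xt ∈ Xγ := by
      refine ⟨hxtY, fun i => ?_⟩
      have hcvx := (hfIv i).2 hxsX.1 hxbar (by linarith : (0:ℝ) ≤ 1 - t) ht0 (by ring)
      have h1 : fI i xs ≤ 0 := hxsX.2 i
      have h2 : fI i xbar ≤ -ε := by have := hεi i; linarith
      have h3 : t * fI i xbar ≤ t * (-ε) := mul_le_mul_of_nonneg_left h2 ht0
      have h4 : (1 - t) * fI i xs ≤ 0 := mul_nonpos_of_nonneg_of_nonpos (by linarith) h1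
      have hcvx' : fI i xt ≤ (1 - t) * fI i xs + t * fI i xbar := by
        rw [hxtdef]; exact hcvx
      nlinarith
    have hdiff : xt - xs = t • (xbar - xs) := by
      rw [hxtdef]; module
    have hnorm : ‖xt - xs‖ ≤ t * Metric.diam X := by
      rw [hdiff, norm_smul, Real.norm_eq_abs, abs_of_nonneg ht0]
      exact mul_le_mul_of_nonneg_left
        (by simpa [dist_eq_norm] using Metric.dist_le_diam_of_mem hX.isBounded hxbarX hxsX)
        ht0
    have hcγ : t * Metric.diam X = 2 * Metric.diam X / ε * γ := by
      rw [htdef]; ring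
    have hHxt : f xt - f xs ≤ L * ‖xt - xs‖ ^ α :=
      (le_abs_self _).trans (hHol xt hxtY xs hxsX.1)
    have hrpow : ‖xt - xs‖ ^ α ≤ (2 * Metric.diam X / ε * γ) ^ α :=
      Real.rpow_le_rpow (norm_nonneg _) (by rw [← hcγ]; exact hnorm) hα0.le
    have hInfle : sInf (f '' Xγ) ≤ f xt := csInf_le hbddXγ (Set.mem_image_of_mem f hxtXγ)
    have := mul_le_mul_of_nonneg_left hrpow hL
    rw [hInfX]
    linarith
  · -- equality case
    rintro ⟨xm, hxmX, hxmmin, hxmγ⟩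
    have hxmXγ : xm ∈ Xγ := ⟨hxmX.1, hxmγ⟩
    have h1 : sInf (f '' Xγ) ≤ f xm := csInf_le hbddXγ (Set.mem_image_of_mem f hxmXγ)
    have h2 : f xm = sInf (f '' X) :=
      (IsLeast.csInf_eq ⟨Set.mem_image_of_mem f hxmX,
        fun v ⟨z, hz, hzv⟩ => hzv ▸ hxmmin z hz⟩).symm
    linarith
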